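/- Let G be a finite p-group and F a field of characteristic p. Then Δ(F Soc(G))·FG + Δ(FG)^2 = Ω_1(Z(FG)) + Δ(FG)^2, where Soc(G) = Ω_1(Z(G)) is the socle of G and Ω_1(Z(FG)) = { x ∈ Z(FG) : x^p = 0 }. -/

import Mathlib

open MonoidAlgebra MulAction

/-- Generic lemma: sum over an invariant finset, with values whose differences along
orbits lie in `P` and with orbit-size multiples in `P`, reduces mod `P` to the sum over
fixed points. -/
lemma socle_orb_sum {H X M : Type*} [Group H] [Finite H] [MulAction H X] [AddCommGroup M]
    [DecidableEq X]
    (P : AddSubgroup M) (v : X → M)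
    (hv : ∀ (h : H) (x : X), v (h • x) - v x ∈ P) :
    ∀ (s t : Finset X), (∀ (h : H) x, x ∈ s → h • x ∈ s) →
      (∀ x, x ∈ t ↔ x ∈ s ∧ ∀ h : H, h • x = x) →
      (∀ x ∈ s, (¬ ∀ h : H, h • x = x) → (Nat.card (orbit H x)) • v x ∈ P) →
      (∑ x ∈ s, v x) - (∑ x ∈ t, v x) ∈ P := by
  classical
  have := Fintype.ofFinite H
  intro s
  induction s using Finset.strongInduction with
  | _ s ih =>
    intro t hs ht hcard
    by_cases hall : ∀ x ∈ s, ∀ h : H, h • x = x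
    · have : t = s := by
        ext x; rw [ht]
        exact ⟨fun h => h.1, fun hx => ⟨hx, hall x hx⟩⟩
      rw [this, sub_self]
      exact P.zero_mem
    · push_neg at hall
      obtain ⟨x₀, hx₀s, h₀, hnf⟩ := hall
      have hnf' : ¬ ∀ h : H, h • x₀ = x₀ := fun hh => hnf (hh h₀)
      set K : Finset X := Finset.univ.image (fun h : H => h • x₀) with hK
      have hmemK : ∀ z, z ∈ K ↔ ∃ h : H, h • x₀ = z := by
        intro z; rw [hK, Finset.mem_image]; simp
      have hKs : K ⊆ s := by
        intro z hz
        obtain ⟨h, rfl⟩ := (hmemK z).1 hz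
        exact hs h x₀ hx₀s
      have hx₀K : x₀ ∈ K := (hmemK x₀).2 ⟨1, one_smul _ _⟩
      have hKnonfix : ∀ z ∈ K, ¬ ∀ h : H, h • z = z := by
        intro z hz hfix
        obtain ⟨h, rfl⟩ := (hmemK z).1 hz
        have hx : h • x₀ = x₀ := by
          have := hfix h⁻¹
          rw [inv_smul_smul] at this
          exact this.symm
        exact hnf' fun h' => by have := hfix h'; rwa [hx] at this
      have horb : orbit H x₀ = (K : Set X) := by
        ext z
        simp [MulAction.mem_orbit_iff, hmemK z, eq_comm]
      have hcardK : K.card = Nat.card (orbit H x₀) := by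
        rw [horb, Nat.card_coe_set_eq, Set.ncard_coe_finset]
      have hsumK : (∑ z ∈ K, v z) ∈ P := by
        have h1 : (∑ z ∈ K, v z) = (∑ z ∈ K, (v z - v x₀)) + K.card • v x₀ := by
          rw [Finset.sum_sub_distrib, Finset.sum_const]
          abel
        rw [h1]
        refine P.add_mem (AddSubgroup.sum_mem _ ?_) ?_
        · intro z hz
          obtain ⟨h, rfl⟩ := (hmemK z).1 hz
          exact hv h x₀
        · rw [hcardK]
          exact hcard x₀ hx₀s hnf'
      have hss : s \ K ⊂ s := by
        apply Finset.sdiff_ssubset ?_ ⟨x₀, hx₀K⟩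
        exact hKs
      have hcl : ∀ (h : H) x, x ∈ s \ K → h • x ∈ s \ K := by
        intro h x hx
        rw [Finset.mem_sdiff] at hx ⊢
        refine ⟨hs h x hx.1, fun hmem => hx.2 ?_⟩
        obtain ⟨h', hh'⟩ := (hmemK _).1 hmem
        exact (hmemK x).2 ⟨h⁻¹ * h', by rw [mul_smul, hh', inv_smul_smul]⟩
      have ht' : ∀ x, x ∈ t ↔ x ∈ s \ K ∧ ∀ h : H, h • x = x := by
        intro x
        rw [ht, Finset.mem_sdiff]
        constructor
        · rintro ⟨hxs, hfix⟩
          exact ⟨⟨hxs, fun hxK => hKnonfix x hxK hfix⟩, hfix⟩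
        · rintro ⟨⟨hxs, _⟩, hfix⟩
          exact ⟨hxs, hfix⟩
      have hrec := ih (s \ K) hss t hcl ht'
        (fun x hx => hcard x (Finset.mem_sdiff.1 hx).1)
      have hsplit : (∑ x ∈ s, v x) = (∑ x ∈ s \ K, v x) + ∑ x ∈ K, v x :=
        (Finset.sum_sdiff hKs).symm
      have : (∑ x ∈ s, v x) - (∑ x ∈ t, v x)
          = ((∑ x ∈ s \ K, v x) - (∑ x ∈ t, v x)) + ∑ x ∈ K, v x := by
        rw [hsplit]; abel
      rw [this]
      exact P.add_mem hrec hsumK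

/-- Expansion of a power of an element of a monoid algebra as a sum over tuples. -/
lemma socle_pow_expand {F G : Type*} [CommSemiring F] [Monoid G] [Fintype G] [DecidableEq G]
    (a : MonoidAlgebra F G) (n : ℕ) :
    a ^ n = ∑ f : Fin n → G, single (List.ofFn f).prod (∏ i, a.coeff (f i)) := by
  induction n with
  | zero =>
    rw [pow_zero]
    rw [Fintype.sum_unique]
    simp [MonoidAlgebra.one_def]
  | succ n ih =>
    have ha : a = ∑ g : G, single g (a.coeff g) := by
      conv_lhs => rw [← MonoidAlgebra.sum_coeff_single a]
      exact Finsupp.sum_fintype _ _ (fun g => single_zero g)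
    calc a ^ (n + 1) = a * a ^ n := by rw [pow_succ']
    _ = (∑ g : G, single g (a.coeff g)) * (∑ f : Fin n → G, single (List.ofFn f).prod (∏ i, a.coeff (f i))) := by
        rw [← ha, ← ih]
    _ = ∑ g : G, ∑ f : Fin n → G,
          single (g * (List.ofFn f).prod) (a.coeff g * ∏ i, a.coeff (f i)) := by
        rw [Finset.sum_mul_sum]
        simp [MonoidAlgebra.single_mul_single]
    _ = ∑ f : Fin (n+1) → G, single (List.ofFn f).prod (∏ i, a.coeff (f i)) := by
        rw [← Fintype.sum_prod_type']
        apply Fintype.sum_equiv (Fin.consEquiv (fun _ => G))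
        rintro ⟨g, f⟩
        have h1 : List.ofFn (Fin.cons g f : Fin (n+1) → G) = g :: List.ofFn f := by
          rw [List.ofFn_succ]
          simp
        have h2 : (∏ i : Fin (n+1), a.coeff ((Fin.cons g f : Fin (n+1) → G) i))
            = a.coeff g * ∏ i : Fin n, a.coeff (f i) := by
          rw [Fin.prod_univ_succ]
          simp
        simp only [Fin.consEquiv, Equiv.coe_fn_mk, h1, h2, List.prod_cons]

/-- The rotation action of `Multiplicative (Fin p)` on tuples. -/
def socleRotAct (p : ℕ) [NeZero p] (G : Type*) :
    MulAction (Multiplicative (Fin p)) (Fin p → G) where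
  smul k f := fun i => f (i + k.toAdd)
  one_smul f := funext fun i => by
    show f (i + (1 : Multiplicative (Fin p)).toAdd) = f i
    simp
  mul_smul k l f := funext fun i => by
    show f (i + (k * l).toAdd) = f (i + k.toAdd + l.toAdd)
    rw [toAdd_mul]
    rw [add_assoc]

/-- Coefficient of a central element in a `p`-th power. -/
lemma socle_key1 {F G : Type*} [Field F] (p : ℕ) [Fact p.Prime] [CharP F p]
    [Group G] [Fintype G] [DecidableEq G]
    (w : G) (hw : w ∈ Subgroup.center G) (y : MonoidAlgebra F G) :
    (y ^ p).coeff w = ∑ g ∈ Finset.univ.filter (fun g => g ^ p = w), (y.coeff g) ^ p := by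
  classical
  haveI : NeZero p := ⟨(Fact.out (p := p.Prime)).ne_zero⟩
  have hp : 0 < p := (Fact.out (p := p.Prime)).pos
  letI : MulAction (Multiplicative (Fin p)) (Fin p → G) := socleRotAct p G
  set H := Multiplicative (Fin p)
  have hsmul : ∀ (k : H) (f : Fin p → G) (i : Fin p), (k • f) i = f (i + k.toAdd) :=
    fun _ _ _ => rfl
  have h1 : (y ^ p).coeff w = ∑ f ∈ Finset.univ.filter
      (fun f : Fin p → G => (List.ofFn f).prod = w), ∏ i, y.coeff (f i) := by
    rw [socle_pow_expand, MonoidAlgebra.coeff_sum, Finsupp.finset_sum_apply]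
    rw [Finset.sum_filter]
    apply Finset.sum_congr rfl
    intro f _
    rw [MonoidAlgebra.coeff_single, Finsupp.single_apply]
  have hofn : ∀ (k : H) (f : Fin p → G),
      List.ofFn (k • f) = (List.ofFn f).rotate (k.toAdd : Fin p).val := by
    intro k f
    apply List.ext_get
    · simp
    · intro n h₁ h₂
      rw [List.get_ofFn, List.get_rotate, List.get_ofFn, hsmul]
      congr 1
      apply Fin.ext
      simp [Fin.add_def]
  have hrotp : ∀ (l : List G) (n : ℕ), 0 < l.length → l.prod = w → (l.rotate n).prod = w := by
    intro l n hl hpr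
    rw [← List.rotate_mod]
    have hn : n % l.length ≤ l.length := le_of_lt (Nat.mod_lt _ hl)
    rw [List.rotate_eq_drop_append_take hn, List.prod_append]
    have hw2 : (l.take (n % l.length)).prod * (l.drop (n % l.length)).prod = w := by
      rw [← List.prod_append, List.take_append_drop, hpr]
    have hcen := Subgroup.mem_center_iff.1 hw
    set t := (l.take (n % l.length)).prod
    set d := (l.drop (n % l.length)).prod
    have hd : d = t⁻¹ * w := by rw [← hw2]; group
    rw [hd, mul_assoc, ← hcen t, ← mul_assoc, inv_mul_cancel, one_mul]
  set s : Finset (Fin p → G) :=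
    Finset.univ.filter (fun f : Fin p → G => (List.ofFn f).prod = w) with hsdef
  set t : Finset (Fin p → G) := s.filter (fun f => ∀ k : H, k • f = f) with htdef
  have hs : ∀ (k : H) f, f ∈ s → k • f ∈ s := by
    intro k f hf
    rw [hsdef, Finset.mem_filter] at hf ⊢
    refine ⟨Finset.mem_univ _, ?_⟩
    rw [hofn]
    exact hrotp _ _ (by simp [hp]) hf.2
  have ht : ∀ f, f ∈ t ↔ f ∈ s ∧ ∀ k : H, k • f = f := by
    intro f; rw [htdef, Finset.mem_filter]
  have hH : IsPGroup p H := by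
    apply IsPGroup.of_card (n := 1)
    simp [H, Nat.card_eq_fintype_card, pow_one]
  have hc : ∀ f ∈ s, (¬ ∀ k : H, k • f = f) →
      (Nat.card (orbit H f)) • (∏ i, y.coeff (f i)) ∈ (⊥ : AddSubgroup F) := by
    intro f _ hnf
    obtain ⟨m, hm⟩ := hH.card_orbit f
    rcases Nat.eq_zero_or_pos m with rfl | hm1
    · exfalso
      rw [pow_zero] at hm
      rw [Nat.card_eq_one_iff_unique] at hm
      apply hnf
      intro k
      have := hm.1.elim ⟨k • f, mem_orbit _ _⟩ ⟨f, mem_orbit_self _⟩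
      exact congrArg Subtype.val this
    · rw [AddSubgroup.mem_bot, hm, nsmul_eq_mul]
      have : ((p ^ m : ℕ) : F) = 0 := by
        rw [CharP.cast_eq_zero_iff F p]
        exact dvd_pow_self p hm1.ne'
      rw [this, zero_mul]
  have hv : ∀ (k : H) (f : Fin p → G),
      (∏ i, y.coeff ((k • f) i)) - (∏ i, y.coeff (f i)) ∈ (⊥ : AddSubgroup F) := by
    intro k f
    rw [AddSubgroup.mem_bot, sub_eq_zero]
    calc (∏ i, y.coeff ((k • f) i)) = ∏ i, y.coeff (f (i + k.toAdd)) := by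
          apply Finset.prod_congr rfl; intro i _; rw [hsmul]
    _ = ∏ i, y.coeff (f i) := Equiv.prod_comp (Equiv.addRight k.toAdd) (fun j => y.coeff (f j))
  have horb := socle_orb_sum (⊥ : AddSubgroup F) (fun f => ∏ i, y.coeff (f i)) hv s t hs ht hc
  rw [AddSubgroup.mem_bot, sub_eq_zero] at horb
  rw [h1, horb]
  refine Finset.sum_nbij' (fun f => f 0) (fun g => (fun _ => g)) ?_ ?_ ?_ ?_ ?_
  · intro f hf
    rw [ht] at hf
    have hconst : ∀ i, f i = f 0 := by
      intro i
      have := congrFun (hf.2 (Multiplicative.ofAdd i)) 0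
      rw [hsmul] at this
      simpa using this
    have hfs := hf.1
    rw [hsdef, Finset.mem_filter] at hfs
    rw [Finset.mem_filter]
    refine ⟨Finset.mem_univ _, ?_⟩
    have : f = fun _ => f 0 := funext hconst
    rw [this] at hfs
    simpa [List.prod_replicate] using hfs.2
  · intro g hg
    rw [Finset.mem_filter] at hg
    rw [ht]
    constructor
    · rw [hsdef, Finset.mem_filter]
      exact ⟨Finset.mem_univ _, by simpa [List.prod_replicate] using hg.2⟩
    · intro k; funext i; rw [hsmul]
  · intro f hf
    rw [ht] at hf
    have hconst : ∀ i, f i = f 0 := by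
      intro i
      have := congrFun (hf.2 (Multiplicative.ofAdd i)) 0
      rw [hsmul] at this
      simpa using this
    exact (funext hconst).symm
  · intro g _; rfl
  · intro f hf
    rw [ht] at hf
    have hconst : ∀ i, f i = f 0 := by
      intro i
      have := congrFun (hf.2 (Multiplicative.ofAdd i)) 0
      rw [hsmul] at this
      simpa using this
    calc (∏ i, y.coeff (f i)) = ∏ _i : Fin p, y.coeff (f 0) := by
          apply Finset.prod_congr rfl; intro i _; rw [hconst]
    _ = (y.coeff (f 0)) ^ p := by rw [Finset.prod_const, Finset.card_univ, Fintype.card_fin]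

/-- Orbit-sum lemma specialised to the conjugation action. -/
lemma socle_conj_orb {G M : Type*} [Group G] [Finite G] [DecidableEq G] (p : ℕ) [Fact p.Prime]
    (hG : IsPGroup p G) [AddCommGroup M] (P : AddSubgroup M) (v : G → M)
    (hv : ∀ c g : G, v (c * g * c⁻¹) - v g ∈ P)
    (hcard : ∀ g : G, g ∉ Subgroup.center G → ∀ n : ℕ, p ∣ n → n • v g ∈ P)
    (s t : Finset G) (hs : ∀ c g : G, g ∈ s → c * g * c⁻¹ ∈ s)
    (ht : ∀ g, g ∈ t ↔ g ∈ s ∧ g ∈ Subgroup.center G) :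
    (∑ g ∈ s, v g) - (∑ g ∈ t, v g) ∈ P := by
  classical
  have hfix : ∀ g : G, (∀ h : ConjAct G, h • g = g) ↔ g ∈ Subgroup.center G := by
    intro g
    constructor
    · intro h
      rw [Subgroup.mem_center_iff]
      intro b
      have := h (ConjAct.toConjAct b)
      rw [ConjAct.toConjAct_smul] at this
      have := congrArg (· * b) this
      simpa [mul_assoc] using this
    · intro hg h
      rw [ConjAct.smul_def]
      have := Subgroup.mem_center_iff.1 hg (ConjAct.ofConjAct h)
      rw [this, mul_assoc, mul_inv_cancel, mul_one]
  have hGc : IsPGroup p (ConjAct G) := hG.of_equiv ConjAct.toConjAct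
  haveI : Finite (ConjAct G) := Finite.of_equiv G ConjAct.toConjAct.toEquiv
  refine socle_orb_sum (H := ConjAct G) P v
    (fun h x => by rw [ConjAct.smul_def]; exact hv _ _)
    s t
    (fun h x hx => by rw [ConjAct.smul_def]; exact hs _ _ hx)
    (fun x => by rw [ht, hfix x])
    ?_
  intro x hx hnf
  obtain ⟨m, hm⟩ := hGc.card_orbit x
  rcases Nat.eq_zero_or_pos m with rfl | hm1
  · exfalso
    rw [pow_zero] at hm
    rw [Nat.card_eq_one_iff_unique] at hm
    apply hnf
    intro k
    have := hm.1.elim ⟨k • x, mem_orbit _ _⟩ ⟨x, mem_orbit_self _⟩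
    exact congrArg Subtype.val this
  · rw [hm]
    exact hcard x (fun hc => hnf ((hfix x).2 hc)) _ (dvd_pow_self p hm1.ne')

theorem socle_aux (p : ℕ) [Fact p.Prime] (F : Type*) [Field F] [CharP F p]
    (G : Type*) [Group G] [Finite G] (hG : IsPGroup p G) :
    ((Ideal.span {a : MonoidAlgebra F G | ∃ s ∈ Subgroup.closure
        {g : G | g ∈ Subgroup.center G ∧ g ^ p = 1}, a = MonoidAlgebra.of F G s - 1} ⊔
      (RingHom.ker ((MonoidAlgebra.lift F F G) 1).toRingHom) ^ 2 :
        Ideal (MonoidAlgebra F G)) : Set (MonoidAlgebra F G)) =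
      {x : MonoidAlgebra F G | ∃ y ∈ Subalgebra.center F (MonoidAlgebra F G),
        y ^ p = 0 ∧ ∃ z ∈ ((RingHom.ker ((MonoidAlgebra.lift F F G) 1).toRingHom :
          Ideal (MonoidAlgebra F G)) ^ 2 : Ideal (MonoidAlgebra F G)), x = y + z} := by
  classical
  haveI := Fintype.ofFinite G
  have hp : p.Prime := Fact.out
  have hp0 : p ≠ 0 := hp.ne_zero
  set ε : MonoidAlgebra F G →ₐ[F] F := (MonoidAlgebra.lift F F G) 1 with hεdef
  set Δ : Ideal (MonoidAlgebra F G) := RingHom.ker ε.toRingHom with hΔdef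
  set Dsoc : Ideal (MonoidAlgebra F G) := Ideal.span {a : MonoidAlgebra F G | ∃ s ∈ Subgroup.closure
        {g : G | g ∈ Subgroup.center G ∧ g ^ p = 1}, a = MonoidAlgebra.of F G s - 1} with hDdef
  have hqε : ∀ (g : G) (c : F), ε (single g c) = c := by
    intro g c
    rw [hεdef, MonoidAlgebra.lift_single]
    simp
  haveI hCharA : CharP (MonoidAlgebra F G) p := by
    apply charP_of_injective_algebraMap (R := F)
    intro a b h
    have := congrArg ε h
    rwa [AlgHom.commutes, AlgHom.commutes, Algebra.algebraMap_self_apply, Algebra.algebraMap_self_apply] at this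
  have hmemΔ : ∀ a : MonoidAlgebra F G, a ∈ Δ ↔ ε a = 0 := by
    intro a
    rw [hΔdef]
    exact RingHom.mem_ker (f := ε.toRingHom)
  have hgenΔ : ∀ g : G, (single g 1 : MonoidAlgebra F G) - 1 ∈ Δ := by
    intro g
    rw [hmemΔ, map_sub, map_one, hqε, sub_self]
  have hsq : ∀ a b : MonoidAlgebra F G, a ∈ Δ → b ∈ Δ → a * b ∈ Δ ^ 2 := by
    intro a b ha hb
    have h2 : Δ ^ 2 = Δ * Δ := by rw [Submodule.pow_succ, Submodule.pow_one]
    rw [h2]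
    exact Ideal.mul_mem_mul ha hb
  have hcdiff : ∀ c g : G, (single (c * g * c⁻¹) 1 : MonoidAlgebra F G) - single g 1 ∈ Δ ^ 2 := by
    intro c g
    have e : (single (c * g * c⁻¹) 1 : MonoidAlgebra F G) - single g 1
        = ((single c 1 : MonoidAlgebra F G) - 1) * (single (g * c⁻¹) 1 - 1)
          - ((single (g * c⁻¹) 1 : MonoidAlgebra F G) - 1) * (single c 1 - 1) := by
      simp only [mul_sub, sub_mul, MonoidAlgebra.single_mul_single, one_mul, mul_one]
      rw [mul_assoc, inv_mul_cancel_right]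
      abel
    rw [e]
    exact sub_mem (hsq _ _ (hgenΔ c) (hgenΔ _)) (hsq _ _ (hgenΔ _) (hgenΔ c))
  have hZ1 : ∀ z : G, z ∈ Subgroup.center G →
      (single z 1 : MonoidAlgebra F G) ∈ Subalgebra.center F (MonoidAlgebra F G) := by
    intro z hz
    rw [Subalgebra.mem_center_iff]
    intro b
    apply MonoidAlgebra.ext
    apply Finsupp.ext
    intro a
    rw [MonoidAlgebra.mul_single_apply, MonoidAlgebra.single_mul_apply, one_mul, mul_one]
    congr 1
    have hzi : z⁻¹ ∈ Subgroup.center G := inv_mem hz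
    exact Subgroup.mem_center_iff.1 hzi a
  have hcoeff : ∀ y : MonoidAlgebra F G, y ∈ Subalgebra.center F (MonoidAlgebra F G) →
      ∀ c g : G, y.coeff (c * g * c⁻¹) = y.coeff g := by
    intro y hy c g
    have h := (Subalgebra.mem_center_iff.1 hy) (single c 1)
    have h2 := congrArg (fun v : MonoidAlgebra F G => v.coeff (c * g)) h
    simp only [MonoidAlgebra.single_mul_apply, MonoidAlgebra.mul_single_apply,
      one_mul, mul_one, inv_mul_cancel_left] at h2
    exact h2.symm
  have hsoc : ∀ s ∈ Subgroup.closure {g : G | g ∈ Subgroup.center G ∧ g ^ p = 1},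
      s ∈ Subgroup.center G ∧ s ^ p = 1 := by
    intro s hs
    induction hs using Subgroup.closure_induction with
    | mem x hx => exact hx
    | one => exact ⟨(Subgroup.center G).one_mem, one_pow p⟩
    | mul x y _ _ ihx ihy =>
        refine ⟨mul_mem ihx.1 ihy.1, ?_⟩
        have hcomm : Commute x y := Subgroup.mem_center_iff.1 ihy.1 x
        rw [hcomm.mul_pow, ihx.2, ihy.2, one_mul]
    | inv x _ ihx =>
        exact ⟨inv_mem ihx.1, by rw [inv_pow, ihx.2, inv_one]⟩
  ext x
  simp only [SetLike.mem_coe, Set.mem_setOf_eq]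
  constructor
  · intro hx
    rw [Submodule.mem_sup] at hx
    obtain ⟨d, hd, q, hq, rfl⟩ := hx
    have hprop : ∃ y ∈ Subalgebra.center F (MonoidAlgebra F G),
        y ^ p = 0 ∧ ∃ z ∈ Δ ^ 2, d = y + z := by
      refine Submodule.span_induction ?_ ?_ ?_ ?_ hd
      · rintro a ⟨s0, hs0, rfl⟩
        obtain ⟨hs0c, hs0p⟩ := hsoc s0 hs0
        refine ⟨MonoidAlgebra.of F G s0 - 1, ?_, ?_, 0, Submodule.zero_mem _, (add_zero _).symm⟩
        · exact sub_mem (by rw [MonoidAlgebra.of_apply]; exact hZ1 s0 hs0c) (one_mem _)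
        · rw [MonoidAlgebra.of_apply, sub_pow_char_of_commute _ (Commute.one_right _),
            MonoidAlgebra.single_pow, hs0p, one_pow, one_pow, ← MonoidAlgebra.one_def, sub_self]
      · exact ⟨0, Subalgebra.zero_mem _, by rw [zero_pow hp0],
          0, Submodule.zero_mem _, by rw [add_zero]⟩
      · rintro a b _ _ ⟨y1, hy1, hy1p, z1, hz1, rfl⟩ ⟨y2, hy2, hy2p, z2, hz2, rfl⟩
        refine ⟨y1 + y2, add_mem hy1 hy2, ?_, z1 + z2, add_mem hz1 hz2, by abel⟩
        have hcomm : Commute y1 y2 := Subalgebra.mem_center_iff.1 hy2 y1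
        rw [add_pow_char_of_commute _ hcomm, hy1p, hy2p, add_zero]
      · rintro r a _ ⟨y, hy, hyp, z, hz, rfl⟩
        have hεy : ε y = 0 := by
          have h0 : (ε y) ^ p = 0 := by rw [← map_pow, hyp, map_zero]
          exact (pow_eq_zero_iff hp0).1 h0
        set Ca := algebraMap F (MonoidAlgebra F G) (ε r) with hCa
        have hyΔ : y ∈ Δ := (hmemΔ y).2 hεy
        have hdΔ : r - Ca ∈ Δ := by
          rw [hmemΔ, map_sub, hCa, AlgHom.commutes, Algebra.algebraMap_self_apply, sub_self]
        have hCactr : Ca ∈ Subalgebra.center F (MonoidAlgebra F G) :=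
          Subalgebra.algebraMap_mem _ _
        refine ⟨Ca * y, mul_mem hCactr hy, ?_, (r - Ca) * y + r * z,
          add_mem (hsq _ _ hdΔ hyΔ) (Ideal.mul_mem_left _ r hz), ?_⟩
        · have hcomm : Commute Ca y := (Subalgebra.mem_center_iff.1 hCactr y).symm
          rw [hcomm.mul_pow, hyp, mul_zero]
        · have h1 : r * y = Ca * y + (r - Ca) * y := by
            rw [← add_mul, add_sub_cancel]
          rw [smul_eq_mul, mul_add, h1]
          abel
    obtain ⟨y, hy, hyp, z, hz, hde⟩ := hprop
    exact ⟨y, hy, hyp, z + q, add_mem hz hq, by rw [hde, add_assoc]⟩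
  · rintro ⟨y, hy, hyp, z, hz, rfl⟩
    have hεy : ε y = 0 := by
      have h0 : (ε y) ^ p = 0 := by rw [← map_pow, hyp, map_zero]
      exact (pow_eq_zero_iff hp0).1 h0
    have hconj := hcoeff y hy
    -- key vanishing of central coefficient sums
    have hw0 : ∀ w : G, w ∈ Subgroup.center G →
        ∑ z0 ∈ (Finset.univ.filter (fun g : G => g ∈ Subgroup.center G)).filter
          (fun g : G => g ^ p = w), y.coeff z0 = 0 := by
      intro w hw
      have h1 := socle_key1 p w hw y
      rw [hyp, MonoidAlgebra.coeff_zero, Finsupp.zero_apply] at h1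
      have h2 : (∑ g ∈ Finset.univ.filter (fun g : G => g ^ p = w), (y.coeff g) ^ p)
          - (∑ g ∈ (Finset.univ.filter (fun g : G => g ∈ Subgroup.center G)).filter
              (fun g : G => g ^ p = w), (y.coeff g) ^ p) ∈ (⊥ : AddSubgroup F) := by
        refine socle_conj_orb p hG (⊥ : AddSubgroup F) (fun g => (y.coeff g) ^ p) ?_ ?_ _ _ ?_ ?_
        · intro c g
          show (y.coeff (c * g * c⁻¹)) ^ p - (y.coeff g) ^ p ∈ _
          rw [AddSubgroup.mem_bot, hconj c g, sub_self]
        · intro g _ n hn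
          show n • (y.coeff g) ^ p ∈ _
          rw [AddSubgroup.mem_bot, nsmul_eq_mul]
          have : ((n : ℕ) : F) = 0 := (CharP.cast_eq_zero_iff F p n).2 hn
          rw [this, zero_mul]
        · intro c g hg
          rw [Finset.mem_filter] at hg ⊢
          refine ⟨Finset.mem_univ _, ?_⟩
          have : (c * g * c⁻¹) ^ p = c * g ^ p * c⁻¹ := by
            have := map_pow (MulAut.conj c) g p
            simpa [MulAut.conj_apply] using this.symm
          rw [this, hg.2]
          have := Subgroup.mem_center_iff.1 hw c
          rw [this, mul_assoc, mul_inv_cancel, mul_one]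
        · intro g
          simp only [Finset.mem_filter, Finset.mem_univ, true_and]
          tauto
      rw [AddSubgroup.mem_bot, sub_eq_zero] at h2
      have h3 : (∑ z0 ∈ (Finset.univ.filter (fun g : G => g ∈ Subgroup.center G)).filter
          (fun g : G => g ^ p = w), y.coeff z0) ^ p = 0 := by
        rw [sum_pow_char, ← h2, ← h1]
      exact (pow_eq_zero_iff hp0).1 h3
    -- decomposition of y
    have hrepr : y = ∑ g : G, single g (y.coeff g) := by
      conv_lhs => rw [← MonoidAlgebra.sum_coeff_single y]
      exact Finsupp.sum_fintype _ _ (fun g => single_zero g)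
    have hy_sum : y = ∑ g : G, y.coeff g • ((single g 1 : MonoidAlgebra F G) - 1) := by
      have h1 : ∑ g : G, y.coeff g • (single g 1 : MonoidAlgebra F G) = y := by
        conv_rhs => rw [hrepr]
        apply Finset.sum_congr rfl
        intro g _
        rw [MonoidAlgebra.smul_single', mul_one]
      have hεsum : ε y = ∑ g : G, y.coeff g := by
        conv_lhs => rw [hrepr]
        rw [map_sum]
        apply Finset.sum_congr rfl
        intro g _
        rw [hqε]
      have h2 : ∑ g : G, y.coeff g • (1 : MonoidAlgebra F G) = 0 := by
        rw [← Finset.sum_smul, ← hεsum, hεy, zero_smul]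
      calc y = (∑ g : G, y.coeff g • (single g 1 : MonoidAlgebra F G))
            - ∑ g : G, y.coeff g • (1 : MonoidAlgebra F G) := by rw [h1, h2, sub_zero]
      _ = ∑ g : G, (y.coeff g • (single g 1 : MonoidAlgebra F G) - y.coeff g • (1 : MonoidAlgebra F G)) := by
            rw [Finset.sum_sub_distrib]
      _ = ∑ g : G, y.coeff g • ((single g 1 : MonoidAlgebra F G) - 1) := by
            apply Finset.sum_congr rfl
            intro g _
            rw [smul_sub]
    -- noncentral part
    have hnc : ∑ g ∈ Finset.univ.filter (fun g : G => g ∉ Subgroup.center G),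
        y.coeff g • ((single g 1 : MonoidAlgebra F G) - 1) ∈ Δ ^ 2 := by
      have hkey := socle_conj_orb p hG ((Δ ^ 2 : Ideal (MonoidAlgebra F G)).toAddSubgroup)
        (fun g => y.coeff g • ((single g 1 : MonoidAlgebra F G) - 1))
        (by
          intro c g
          show y.coeff (c * g * c⁻¹) • ((single (c * g * c⁻¹) 1 : MonoidAlgebra F G) - 1)
            - y.coeff g • ((single g 1 : MonoidAlgebra F G) - 1) ∈ _
          rw [hconj c g, ← smul_sub, sub_sub_sub_cancel_right]
          exact Submodule.mem_toAddSubgroup _ |>.2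
            (Submodule.smul_of_tower_mem _ (y.coeff g) (hcdiff c g)))
        (by
          intro g _ n hn
          show n • (y.coeff g • ((single g 1 : MonoidAlgebra F G) - 1)) ∈ _
          rw [← Nat.cast_smul_eq_nsmul F]
          have : ((n : ℕ) : F) = 0 := (CharP.cast_eq_zero_iff F p n).2 hn
          rw [this, zero_smul]
          exact AddSubgroup.zero_mem _)
        (Finset.univ.filter (fun g : G => g ∉ Subgroup.center G)) (∅ : Finset G)
        (by
          intro c g hg
          rw [Finset.mem_filter] at hg ⊢
          refine ⟨Finset.mem_univ _, ?_⟩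
          intro hcen
          apply hg.2
          have hnrm : c⁻¹ * (c * g * c⁻¹) * c⁻¹⁻¹ ∈ Subgroup.center G :=
            Subgroup.Normal.conj_mem (inferInstance : (Subgroup.center G).Normal) _ hcen c⁻¹
          simpa [mul_assoc] using hnrm)
        (by
          intro g
          simp only [Finset.notMem_empty, Finset.mem_filter, Finset.mem_univ, true_and,
            false_iff]
          tauto)
      rw [Finset.sum_empty, sub_zero] at hkey
      exact (Submodule.mem_toAddSubgroup _).1 hkey
    -- central part
    have hcp : ∑ g ∈ Finset.univ.filter (fun g : G => g ∈ Subgroup.center G),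
        y.coeff g • ((single g 1 : MonoidAlgebra F G) - 1) ∈ Dsoc := by
      rw [← Finset.sum_fiberwise_of_maps_to (g := fun z : G => z ^ p) (t := Finset.univ)
        (fun x _ => Finset.mem_univ _)]
      apply Submodule.sum_mem
      intro w _
      set Sw : Finset G := (Finset.univ.filter (fun g : G => g ∈ Subgroup.center G)).filter
        (fun z : G => z ^ p = w) with hSwdef
      rcases Sw.eq_empty_or_nonempty with he | hne
      · rw [he, Finset.sum_empty]
        exact Submodule.zero_mem _
      · obtain ⟨z₀, hz₀⟩ := hne
        have hz₀' := hz₀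
        rw [hSwdef, Finset.mem_filter, Finset.mem_filter] at hz₀'
        obtain ⟨⟨_, hz₀c⟩, hz₀p⟩ := hz₀'
        have hwc : w ∈ Subgroup.center G := hz₀p ▸ pow_mem hz₀c p
        have hsum0 : ∑ z0 ∈ Sw, y.coeff z0 = 0 := hw0 w hwc
        have hsplit : ∀ z1 : G, y.coeff z1 • ((single z1 1 : MonoidAlgebra F G) - 1)
            = y.coeff z1 • ((single z1 1 : MonoidAlgebra F G) - single z₀ 1)
              + y.coeff z1 • ((single z₀ 1 : MonoidAlgebra F G) - 1) := by
          intro z1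
          rw [← smul_add, sub_add_sub_cancel]
        have hred : (∑ z1 ∈ Sw, y.coeff z1 • ((single z1 1 : MonoidAlgebra F G) - 1))
            = ∑ z1 ∈ Sw, y.coeff z1 • ((single z1 1 : MonoidAlgebra F G) - single z₀ 1) := by
          have e1 : (∑ z1 ∈ Sw, y.coeff z1 • ((single z1 1 : MonoidAlgebra F G) - 1))
              = (∑ z1 ∈ Sw, y.coeff z1 • ((single z1 1 : MonoidAlgebra F G) - single z₀ 1))
                + (∑ z1 ∈ Sw, y.coeff z1) • ((single z₀ 1 : MonoidAlgebra F G) - 1) := by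
            rw [Finset.sum_smul, ← Finset.sum_add_distrib]
            exact Finset.sum_congr rfl (fun z1 _ => hsplit z1)
          rw [e1, hsum0, zero_smul, add_zero]
        rw [hred]
        apply Submodule.sum_mem
        intro z1 hz1
        rw [hSwdef, Finset.mem_filter, Finset.mem_filter] at hz1
        obtain ⟨⟨_, hz1c⟩, hz1p⟩ := hz1
        have hcomm : Commute z₀⁻¹ z1 := Subgroup.mem_center_iff.1 hz1c z₀⁻¹
        have hpow1 : (z₀⁻¹ * z1) ^ p = 1 := by
          rw [hcomm.mul_pow, inv_pow, hz₀p, hz1p, inv_mul_cancel]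
        have hgen : (single (z₀⁻¹ * z1) 1 : MonoidAlgebra F G) - 1 ∈ Dsoc := by
          apply Submodule.subset_span
          exact ⟨z₀⁻¹ * z1, Subgroup.subset_closure ⟨mul_mem (inv_mem hz₀c) hz1c, hpow1⟩,
            by rw [MonoidAlgebra.of_apply]⟩
        have heq : (single z1 1 : MonoidAlgebra F G) - single z₀ 1
            = single z₀ 1 * ((single (z₀⁻¹ * z1) 1 : MonoidAlgebra F G) - 1) := by
          simp [mul_sub, MonoidAlgebra.single_mul_single, mul_inv_cancel_left]
        rw [heq]
        exact Submodule.smul_of_tower_mem _ (y.coeff z1) (Ideal.mul_mem_left _ _ hgen)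
    rw [Submodule.mem_sup]
    refine ⟨∑ g ∈ Finset.univ.filter (fun g : G => g ∈ Subgroup.center G),
        y.coeff g • ((single g 1 : MonoidAlgebra F G) - 1), hcp,
      (∑ g ∈ Finset.univ.filter (fun g : G => g ∉ Subgroup.center G),
        y.coeff g • ((single g 1 : MonoidAlgebra F G) - 1)) + z, add_mem hnc hz, ?_⟩
    conv_rhs => rw [hy_sum]
    rw [← Finset.sum_filter_add_sum_filter_not Finset.univ (fun g : G => g ∈ Subgroup.center G)
      (fun g : G => y.coeff g • ((single g 1 : MonoidAlgebra F G) - 1))]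
    rw [add_assoc]

theorem socle_aug_ideal_plus_aug_sq
    (p : ℕ) [Fact p.Prime] (F : Type*) [Field F] [CharP F p]
    (G : Type*) [Group G] [Finite G] (hG : IsPGroup p G) :
    let Δ : Ideal (MonoidAlgebra F G) :=
      RingHom.ker ((MonoidAlgebra.lift F F G) 1).toRingHom
    let Soc : Subgroup G :=
      Subgroup.closure {g : G | g ∈ Subgroup.center G ∧ g ^ p = 1}
    let Dsoc : Ideal (MonoidAlgebra F G) :=
      Ideal.span {a : MonoidAlgebra F G | ∃ s ∈ Soc, a = MonoidAlgebra.of F G s - 1}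
    ((Dsoc ⊔ Δ ^ 2 : Ideal (MonoidAlgebra F G)) : Set (MonoidAlgebra F G)) =
      {x : MonoidAlgebra F G | ∃ y ∈ Subalgebra.center F (MonoidAlgebra F G),
        y ^ p = 0 ∧ ∃ z ∈ (Δ ^ 2 : Ideal (MonoidAlgebra F G)), x = y + z} := by
  intro Δ Soc Dsoc
  exact socle_aux p F G hG
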